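/- arXiv:1904.12352 — 3 statements merged into one kernel-verified Lean document; each statement's English description precedes it below -/
import Mathlib

section
/- Let X and Y be random variables taking values in a finite subset of ℝ, with the same marginal distribution η. Then there is a constant C depending only on η such that |Cov(X, Y)| ≤ C · (I(X;Y))^{1/2}, where I(X;Y) is the mutual information of X and Y. -/
open Finset MeasureTheory

lemma pinsker_term (p q : ℝ) (hp : 0 ≤ p) (hq : 0 ≤ q) (hpq : q = 0 → p = 0) :
    (Real.sqrt p - Real.sqrt q) ^ 2 ≤ p * Real.log p - p * Real.log q - p + q := by
  rcases eq_or_lt_of_le hp with h | hp'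
  · simp [← h, Real.sq_sqrt hq]
  · have hq' : 0 < q := by
      rcases eq_or_lt_of_le hq with h | h
      · exact absurd (hpq h.symm) (by linarith)
      · exact h
    have hsp : 0 < Real.sqrt p := Real.sqrt_pos.2 hp'
    have hsq : 0 < Real.sqrt q := Real.sqrt_pos.2 hq'
    have key : Real.log (Real.sqrt q / Real.sqrt p) ≤ Real.sqrt q / Real.sqrt p - 1 :=
      Real.log_le_sub_one_of_pos (div_pos hsq hsp)
    have h1 : Real.log (Real.sqrt q / Real.sqrt p) = Real.log q / 2 - Real.log p / 2 := by
      rw [Real.log_div hsq.ne' hsp.ne', Real.log_sqrt hq, Real.log_sqrt hp]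
    have h3 : Real.sqrt p * Real.sqrt p = p := Real.mul_self_sqrt hp'.le
    have h4 : Real.sqrt q * Real.sqrt q = q := Real.mul_self_sqrt hq'.le
    have key2 := mul_le_mul_of_nonneg_left key (le_of_lt hp')
    rw [h1] at key2
    have hd : Real.sqrt q / Real.sqrt p * Real.sqrt p = Real.sqrt q := by
      field_simp
    nlinarith [key2, h3, h4, hsp, hsq, sq_nonneg (Real.sqrt p - Real.sqrt q)]

lemma integral_comp {Ω ι : Type*} [MeasurableSpace Ω] [DecidableEq ι] (μ : Measure Ω)
    [IsProbabilityMeasure μ] (S : Finset ι) (W : Ω → ι)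
    (hW : ∀ s, MeasurableSet {ω | W ω = s}) (hWS : ∀ ω, W ω ∈ S) (f : ι → ℝ) :
    ∫ ω, f (W ω) ∂μ = ∑ s ∈ S, f s * (μ {ω | W ω = s}).toReal := by
  have hpt : ∀ ω, f (W ω) = ∑ s ∈ S, Set.indicator {ω | W ω = s} (fun _ => f s) ω := by
    intro ω
    have : ∀ s, Set.indicator {ω | W ω = s} (fun _ => f s) ω = if W ω = s then f s else 0 := by
      intro s; simp [Set.indicator_apply, Set.mem_setOf_eq]
    simp only [this]
    rw [Finset.sum_ite_eq S (W ω) f]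
    simp [hWS ω]
  calc ∫ ω, f (W ω) ∂μ = ∫ ω, ∑ s ∈ S, Set.indicator {ω | W ω = s} (fun _ => f s) ω ∂μ := by
        simp only [hpt]
    _ = ∑ s ∈ S, ∫ ω, Set.indicator {ω | W ω = s} (fun _ => f s) ω ∂μ :=
        integral_finset_sum S (fun s _ => (integrable_const (f s)).indicator (hW s))
    _ = ∑ s ∈ S, f s * (μ {ω | W ω = s}).toReal := by
        refine Finset.sum_congr rfl fun s _ => ?_
        rw [integral_indicator_const (f s) (hW s)]
        simp [mul_comm, Measure.real]

/-- for random variables `X, Y` with values in a finite subset `S ⊆ ℝ`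
and common marginal distribution `η`, there is `C` depending only on `η` (and `S`)
with `|Cov(X,Y)| ≤ C · I(X;Y)^{1/2}`. -/
theorem cov_le_sqrt_mutual_information (S : Finset ℝ) (η : ℝ → ℝ)
    (hη0 : ∀ s, 0 ≤ η s) (hη1 : ∑ s ∈ S, η s = 1) :
    ∃ C : ℝ, ∀ (Ω : Type) (_ : MeasurableSpace Ω) (μ : Measure Ω)
      (_ : IsProbabilityMeasure μ) (X Y : Ω → ℝ),
      Measurable X → Measurable Y →
      (∀ ω, X ω ∈ S) → (∀ ω, Y ω ∈ S) →
      (∀ s ∈ S, (μ {ω | X ω = s}).toReal = η s) →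
      (∀ s ∈ S, (μ {ω | Y ω = s}).toReal = η s) →
      |(∫ ω, X ω * Y ω ∂μ) - (∫ ω, X ω ∂μ) * (∫ ω, Y ω ∂μ)| ≤
        C * Real.sqrt
          (-(∑ s ∈ S, η s * Real.log (η s)) + -(∑ s ∈ S, η s * Real.log (η s))
            - -(∑ s ∈ S, ∑ t ∈ S,
                  (μ {ω | X ω = s ∧ Y ω = t}).toReal *
                    Real.log ((μ {ω | X ω = s ∧ Y ω = t}).toReal))) := by
  classical
  set M : ℝ := ∑ s ∈ S, |s| with hMdef
  have hM0 : 0 ≤ M := Finset.sum_nonneg fun s _ => abs_nonneg s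
  have hMle : ∀ s ∈ S, |s| ≤ M := fun s hs =>
    Finset.single_le_sum (fun i _ => abs_nonneg i) hs
  refine ⟨2 * M ^ 2 * Real.sqrt ((S.card : ℝ) * S.card), ?_⟩
  intro Ω mΩ μ hμ X Y hX hY hXS hYS hμX hμY
  -- abbreviations
  set p : ℝ → ℝ → ℝ := fun s t => (μ {ω | X ω = s ∧ Y ω = t}).toReal with hpdef
  have hp0 : ∀ s t, 0 ≤ p s t := fun s t => ENNReal.toReal_nonneg
  have hmes : ∀ s t : ℝ, MeasurableSet {ω | X ω = s ∧ Y ω = t} := by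
    intro s t
    have : {ω | X ω = s ∧ Y ω = t} = X ⁻¹' {s} ∩ Y ⁻¹' {t} := by
      ext ω; simp [Set.mem_preimage]
    rw [this]
    exact (hX (measurableSet_singleton s)).inter (hY (measurableSet_singleton t))
  -- marginals
  have hmargX : ∀ s ∈ S, ∑ t ∈ S, p s t = η s := by
    intro s hs
    rw [← hμX s hs]
    have hU : {ω | X ω = s} = ⋃ t ∈ S, {ω | X ω = s ∧ Y ω = t} := by
      ext ω
      simp only [Set.mem_setOf_eq, Set.mem_iUnion]
      constructor
      · intro h; exact ⟨Y ω, hYS ω, h, rfl⟩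
      · rintro ⟨t, _, h, _⟩; exact h
    rw [hU, measure_biUnion_finset
      (fun t1 _ t2 _ hne => Set.disjoint_left.2 fun ω h1 h2 => hne (h1.2.symm.trans h2.2))
      (fun t _ => hmes s t)]
    rw [ENNReal.toReal_sum (fun t _ => measure_ne_top μ _)]
  have hmargY : ∀ t ∈ S, ∑ s ∈ S, p s t = η t := by
    intro t ht
    rw [← hμY t ht]
    have hU : {ω | Y ω = t} = ⋃ s ∈ S, {ω | X ω = s ∧ Y ω = t} := by
      ext ω
      simp only [Set.mem_setOf_eq, Set.mem_iUnion]
      constructor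
      · intro h; exact ⟨X ω, hXS ω, rfl, h⟩
      · rintro ⟨s, _, _, h⟩; exact h
    rw [hU, measure_biUnion_finset
      (fun t1 _ t2 _ hne => Set.disjoint_left.2 fun ω h1 h2 => hne (h1.1.symm.trans h2.1))
      (fun s _ => hmes s t)]
    rw [ENNReal.toReal_sum (fun s _ => measure_ne_top μ _)]
  have htot : ∑ s ∈ S, ∑ t ∈ S, p s t = 1 := by
    rw [Finset.sum_congr rfl hmargX, hη1]
  -- p ≤ marginals
  have hpX : ∀ s ∈ S, ∀ t, p s t ≤ η s := by
    intro s hs t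
    rw [← hμX s hs]
    exact ENNReal.toReal_mono (measure_ne_top μ _) (measure_mono fun ω h => h.1)
  have hpY : ∀ t ∈ S, ∀ s, p s t ≤ η t := by
    intro t ht s
    rw [← hμY t ht]
    exact ENNReal.toReal_mono (measure_ne_top μ _) (measure_mono fun ω h => h.2)
  have hηle1 : ∀ s ∈ S, η s ≤ 1 := fun s hs =>
    hη1 ▸ Finset.single_le_sum (fun i _ => hη0 i) hs
  -- integrals
  have hIX : ∫ ω, X ω ∂μ = ∑ s ∈ S, s * η s := by
    have h := integral_comp μ S X (fun s => hX (measurableSet_singleton s)) hXS id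
    simp only [id] at h
    rw [h]
    exact Finset.sum_congr rfl fun s hs => by rw [hμX s hs]
  have hIY : ∫ ω, Y ω ∂μ = ∑ s ∈ S, s * η s := by
    have h := integral_comp μ S Y (fun s => hY (measurableSet_singleton s)) hYS id
    simp only [id] at h
    rw [h]
    exact Finset.sum_congr rfl fun s hs => by rw [hμY s hs]
  have hIXY : ∫ ω, X ω * Y ω ∂μ = ∑ s ∈ S, ∑ t ∈ S, s * t * p s t := by
    have hWmes : ∀ st : ℝ × ℝ, MeasurableSet {ω | (X ω, Y ω) = st} := by
      intro st
      have : {ω | (X ω, Y ω) = st} = {ω | X ω = st.1 ∧ Y ω = st.2} := by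
        ext ω; simp [Prod.ext_iff]
      rw [this]; exact hmes st.1 st.2
    have h := integral_comp μ (S ×ˢ S) (fun ω => (X ω, Y ω)) hWmes
      (fun ω => Finset.mem_product.2 ⟨hXS ω, hYS ω⟩) (fun st => st.1 * st.2)
    simp only at h
    rw [h, Finset.sum_product]
    refine Finset.sum_congr rfl fun s _ => Finset.sum_congr rfl fun t _ => ?_
    have : {ω | (X ω, Y ω) = (s, t)} = {ω | X ω = s ∧ Y ω = t} := by
      ext ω; simp [Prod.ext_iff]
    rw [this]
  -- identify the sqrt argument with relative entropy D
  set D : ℝ := ∑ s ∈ S, ∑ t ∈ S,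
      (p s t * Real.log (p s t) - p s t * Real.log (η s * η t)) with hDdef
  have hq0 : ∀ s ∈ S, ∀ t ∈ S, η s * η t = 0 → p s t = 0 := by
    intro s hs t ht h
    rcases mul_eq_zero.1 h with h | h
    · exact le_antisymm (h ▸ hpX s hs t) (hp0 s t)
    · exact le_antisymm (h ▸ hpY t ht s) (hp0 s t)
  have harg : (-(∑ s ∈ S, η s * Real.log (η s)) + -(∑ s ∈ S, η s * Real.log (η s))
      - -(∑ s ∈ S, ∑ t ∈ S, p s t * Real.log (p s t))) = D := by
    have hsplit : ∀ s ∈ S, ∀ t ∈ S,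
        p s t * Real.log (η s * η t)
          = p s t * Real.log (η s) + p s t * Real.log (η t) := by
      intro s hs t ht
      rcases eq_or_lt_of_le (hp0 s t) with h | h
      · simp [← h]
      · have hηs : 0 < η s := lt_of_lt_of_le h (hpX s hs t)
        have hηt : 0 < η t := lt_of_lt_of_le h (hpY t ht s)
        rw [Real.log_mul hηs.ne' hηt.ne', mul_add]
    have h2 : ∑ s ∈ S, ∑ t ∈ S, p s t * Real.log (η s * η t)
        = (∑ s ∈ S, η s * Real.log (η s)) + (∑ s ∈ S, η s * Real.log (η s)) := by
      rw [Finset.sum_congr rfl fun s hs => Finset.sum_congr rfl fun t ht => hsplit s hs t ht]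
      rw [Finset.sum_congr rfl fun s (hs : s ∈ S) => Finset.sum_add_distrib]
      rw [Finset.sum_add_distrib]
      congr 1
      · refine Finset.sum_congr rfl fun s hs => ?_
        rw [← Finset.sum_mul, hmargX s hs]
      · rw [Finset.sum_comm]
        refine Finset.sum_congr rfl fun t ht => ?_
        rw [← Finset.sum_mul, hmargY t ht]
    rw [hDdef, Finset.sum_congr rfl fun s (_ : s ∈ S) => Finset.sum_sub_distrib _ _,
      Finset.sum_sub_distrib, h2]
    ring
  -- the pinsker bound on the squares
  have hterm : ∀ s ∈ S, ∀ t ∈ S,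
      (Real.sqrt (p s t) - Real.sqrt (η s * η t)) ^ 2
        ≤ p s t * Real.log (p s t) - p s t * Real.log (η s * η t) - p s t + η s * η t :=
    fun s hs t ht => pinsker_term _ _ (hp0 s t) (mul_nonneg (hη0 s) (hη0 t)) (hq0 s hs t ht)
  have hqtot : ∑ s ∈ S, ∑ t ∈ S, η s * η t = 1 := by
    rw [Finset.sum_congr rfl fun s (_ : s ∈ S) => (by rw [← Finset.mul_sum, hη1, mul_one] :
      ∑ t ∈ S, η s * η t = η s), hη1]
  have hsumsq : ∑ s ∈ S, ∑ t ∈ S, (Real.sqrt (p s t) - Real.sqrt (η s * η t)) ^ 2 ≤ D := by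
    have h1 : ∑ s ∈ S, ∑ t ∈ S, (Real.sqrt (p s t) - Real.sqrt (η s * η t)) ^ 2
        ≤ ∑ s ∈ S, ∑ t ∈ S,
          (p s t * Real.log (p s t) - p s t * Real.log (η s * η t) - p s t + η s * η t) :=
      Finset.sum_le_sum fun s hs => Finset.sum_le_sum fun t ht => hterm s hs t ht
    calc _ ≤ _ := h1
      _ = D := by
        rw [hDdef]
        have : ∀ s ∈ S, ∑ t ∈ S,
            (p s t * Real.log (p s t) - p s t * Real.log (η s * η t) - p s t + η s * η t)
            = (∑ t ∈ S, (p s t * Real.log (p s t) - p s t * Real.log (η s * η t)))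
              - (∑ t ∈ S, p s t) + (∑ t ∈ S, η s * η t) := by
          intro s _
          rw [Finset.sum_add_distrib, Finset.sum_sub_distrib]
        rw [Finset.sum_congr rfl this, Finset.sum_add_distrib, Finset.sum_sub_distrib,
          htot, hqtot]
        ring
  have hD0 : 0 ≤ D :=
    le_trans (Finset.sum_nonneg fun s _ => Finset.sum_nonneg fun t _ => sq_nonneg _) hsumsq
  -- covariance bound
  have hcov : |(∫ ω, X ω * Y ω ∂μ) - (∫ ω, X ω ∂μ) * (∫ ω, Y ω ∂μ)|
      ≤ M ^ 2 * ∑ s ∈ S, ∑ t ∈ S, |p s t - η s * η t| := by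
    rw [hIX, hIY, hIXY, Finset.sum_mul_sum]
    have : (∑ s ∈ S, ∑ t ∈ S, s * t * p s t)
        - ∑ s ∈ S, ∑ t ∈ S, (s * η s) * (t * η t)
        = ∑ s ∈ S, ∑ t ∈ S, s * t * (p s t - η s * η t) := by
      rw [← Finset.sum_sub_distrib]
      refine Finset.sum_congr rfl fun s _ => ?_
      rw [← Finset.sum_sub_distrib]
      exact Finset.sum_congr rfl fun t _ => by ring
    rw [this]
    calc |∑ s ∈ S, ∑ t ∈ S, s * t * (p s t - η s * η t)|
        ≤ ∑ s ∈ S, |∑ t ∈ S, s * t * (p s t - η s * η t)| := Finset.abs_sum_le_sum_abs _ _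
      _ ≤ ∑ s ∈ S, ∑ t ∈ S, |s * t * (p s t - η s * η t)| :=
          Finset.sum_le_sum fun s _ => Finset.abs_sum_le_sum_abs _ _
      _ ≤ ∑ s ∈ S, ∑ t ∈ S, M ^ 2 * |p s t - η s * η t| := by
          refine Finset.sum_le_sum fun s hs => Finset.sum_le_sum fun t ht => ?_
          rw [abs_mul, abs_mul]
          have h1 : |s| * |t| ≤ M * M :=
            mul_le_mul (hMle s hs) (hMle t ht) (abs_nonneg t) hM0
          calc |s| * |t| * |p s t - η s * η t| ≤ M * M * |p s t - η s * η t| :=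
                mul_le_mul_of_nonneg_right h1 (abs_nonneg _)
            _ = M ^ 2 * |p s t - η s * η t| := by ring
      _ = M ^ 2 * ∑ s ∈ S, ∑ t ∈ S, |p s t - η s * η t| := by
          rw [Finset.mul_sum]
          exact Finset.sum_congr rfl fun s _ => by rw [Finset.mul_sum]
  -- |p - q| ≤ 2 |√p - √q|
  have habs : ∀ s ∈ S, ∀ t ∈ S, |p s t - η s * η t|
      ≤ 2 * |Real.sqrt (p s t) - Real.sqrt (η s * η t)| := by
    intro s hs t ht
    have hple1 : p s t ≤ 1 := le_trans (hpX s hs t) (hηle1 s hs)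
    have hqle1 : η s * η t ≤ 1 :=
      mul_le_one₀ (hηle1 s hs) (hη0 t) (hηle1 t ht)
    have hsp1 : Real.sqrt (p s t) ≤ 1 := by
      rw [show (1:ℝ) = Real.sqrt 1 by simp]
      exact Real.sqrt_le_sqrt hple1
    have hsq1 : Real.sqrt (η s * η t) ≤ 1 := by
      rw [show (1:ℝ) = Real.sqrt 1 by simp]
      exact Real.sqrt_le_sqrt hqle1
    have hfact : p s t - η s * η t
        = (Real.sqrt (p s t) - Real.sqrt (η s * η t))
          * (Real.sqrt (p s t) + Real.sqrt (η s * η t)) := by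
      have := Real.mul_self_sqrt (hp0 s t)
      have := Real.mul_self_sqrt (mul_nonneg (hη0 s) (hη0 t))
      nlinarith [Real.sqrt_nonneg (p s t), Real.sqrt_nonneg (η s * η t)]
    rw [hfact, abs_mul]
    have h2 : |Real.sqrt (p s t) + Real.sqrt (η s * η t)| ≤ 2 := by
      rw [abs_of_nonneg (add_nonneg (Real.sqrt_nonneg _) (Real.sqrt_nonneg _))]
      linarith
    calc |Real.sqrt (p s t) - Real.sqrt (η s * η t)|
          * |Real.sqrt (p s t) + Real.sqrt (η s * η t)|
        ≤ |Real.sqrt (p s t) - Real.sqrt (η s * η t)| * 2 :=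
          mul_le_mul_of_nonneg_left h2 (abs_nonneg _)
      _ = 2 * |Real.sqrt (p s t) - Real.sqrt (η s * η t)| := by ring
  -- Cauchy–Schwarz
  have hCS : ∑ s ∈ S, ∑ t ∈ S, |Real.sqrt (p s t) - Real.sqrt (η s * η t)|
      ≤ Real.sqrt ((S.card : ℝ) * S.card) * Real.sqrt D := by
    set a : ℝ × ℝ → ℝ := fun st => |Real.sqrt (p st.1 st.2) - Real.sqrt (η st.1 * η st.2)|
    have ha0 : ∀ st, 0 ≤ a st := fun st => abs_nonneg _
    have hsum : ∑ s ∈ S, ∑ t ∈ S, |Real.sqrt (p s t) - Real.sqrt (η s * η t)|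
        = ∑ st ∈ S ×ˢ S, a st := by rw [Finset.sum_product]
    have hsum2 : ∑ st ∈ S ×ˢ S, a st ^ 2
        = ∑ s ∈ S, ∑ t ∈ S, (Real.sqrt (p s t) - Real.sqrt (η s * η t)) ^ 2 := by
      rw [Finset.sum_product]
      exact Finset.sum_congr rfl fun s _ => Finset.sum_congr rfl fun t _ => sq_abs _
    have cs := Finset.sum_mul_sq_le_sq_mul_sq (S ×ˢ S) (fun _ => (1 : ℝ)) a
    simp only [one_mul, one_pow] at cs
    have hcard : ∑ _st ∈ S ×ˢ S, (1 : ℝ) = (S.card : ℝ) * S.card := by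
      rw [Finset.sum_const, Finset.card_product]
      ring
    rw [hcard] at cs
    have hA0 : 0 ≤ ∑ st ∈ S ×ˢ S, a st := Finset.sum_nonneg fun st _ => ha0 st
    have h1 : ∑ st ∈ S ×ˢ S, a st ≤ Real.sqrt ((S.card : ℝ) * S.card * ∑ st ∈ S ×ˢ S, a st ^ 2) := by
      rw [← Real.sqrt_sq hA0]
      exact Real.sqrt_le_sqrt cs
    have h2 : Real.sqrt ((S.card : ℝ) * S.card * ∑ st ∈ S ×ˢ S, a st ^ 2)
        = Real.sqrt ((S.card : ℝ) * S.card) * Real.sqrt (∑ st ∈ S ×ˢ S, a st ^ 2) :=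
      Real.sqrt_mul (mul_nonneg (Nat.cast_nonneg _) (Nat.cast_nonneg _)) _
    have h3 : Real.sqrt (∑ st ∈ S ×ˢ S, a st ^ 2) ≤ Real.sqrt D := by
      refine Real.sqrt_le_sqrt ?_
      rw [hsum2]; exact hsumsq
    rw [hsum]
    calc ∑ st ∈ S ×ˢ S, a st ≤ _ := h1
      _ = _ := h2
      _ ≤ Real.sqrt ((S.card : ℝ) * S.card) * Real.sqrt D :=
        mul_le_mul_of_nonneg_left h3 (Real.sqrt_nonneg _)
  -- final assembly
  rw [harg]
  have hstep : ∑ s ∈ S, ∑ t ∈ S, |p s t - η s * η t|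
      ≤ 2 * (Real.sqrt ((S.card : ℝ) * S.card) * Real.sqrt D) := by
    calc ∑ s ∈ S, ∑ t ∈ S, |p s t - η s * η t|
        ≤ ∑ s ∈ S, ∑ t ∈ S, 2 * |Real.sqrt (p s t) - Real.sqrt (η s * η t)| :=
          Finset.sum_le_sum fun s hs => Finset.sum_le_sum fun t ht => habs s hs t ht
      _ = 2 * ∑ s ∈ S, ∑ t ∈ S, |Real.sqrt (p s t) - Real.sqrt (η s * η t)| := by
          rw [Finset.mul_sum]
          exact Finset.sum_congr rfl fun s _ => by rw [Finset.mul_sum]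
      _ ≤ 2 * (Real.sqrt ((S.card : ℝ) * S.card) * Real.sqrt D) := by linarith [hCS]
  calc |(∫ ω, X ω * Y ω ∂μ) - (∫ ω, X ω ∂μ) * (∫ ω, Y ω ∂μ)|
      ≤ M ^ 2 * ∑ s ∈ S, ∑ t ∈ S, |p s t - η s * η t| := hcov
    _ ≤ M ^ 2 * (2 * (Real.sqrt ((S.card : ℝ) * S.card) * Real.sqrt D)) :=
        mul_le_mul_of_nonneg_left hstep (sq_nonneg M)
    _ = 2 * M ^ 2 * Real.sqrt ((S.card : ℝ) * S.card) * Real.sqrt D := by ring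
end

section
/- Let (Ω, 𝓕, P) be a probability space, 𝓐 a sub-σ-algebra, and f₁, f₂ ∈ L²(P) with f₂ measurable with respect to 𝓐. If both f₁ and f₂ are bounded by 1 in absolute value, then |Cov(f₁, f₂)| ≤ ‖E[f₁ | 𝓐] - E[f₁]‖₂. -/
open MeasureTheory

/-- for `f₁, f₂ ∈ L²` bounded by 1 with `f₂` measurable with respect
to a sub-σ-algebra `𝓐`, `|Cov(f₁,f₂)| ≤ ‖E[f₁|𝓐] - E[f₁]‖₂`. -/
theorem cov_le_L2_condexp_dist {Ω : Type*} {mΩ : MeasurableSpace Ω}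
    (μ : Measure Ω) [IsProbabilityMeasure μ]
    (𝓐 : MeasurableSpace Ω) (h𝓐 : 𝓐 ≤ mΩ)
    (f₁ f₂ : Ω → ℝ)
    (hf₁ : MemLp f₁ 2 μ) (hf₂ : MemLp f₂ 2 μ)
    (hf₂meas : StronglyMeasurable[𝓐] f₂)
    (hb₁ : ∀ᵐ ω ∂μ, |f₁ ω| ≤ 1) (hb₂ : ∀ᵐ ω ∂μ, |f₂ ω| ≤ 1) :
    |(∫ ω, f₁ ω * f₂ ω ∂μ) - (∫ ω, f₁ ω ∂μ) * (∫ ω, f₂ ω ∂μ)| ≤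
      Real.sqrt (∫ ω, ((μ[f₁|𝓐]) ω - ∫ ω', f₁ ω' ∂μ) ^ 2 ∂μ) := by
  set m : ℝ := ∫ ω', f₁ ω' ∂μ with hm
  have hf₁i : Integrable f₁ μ := hf₁.integrable one_le_two
  have hf₂i : Integrable f₂ μ := hf₂.integrable one_le_two
  have hb₂' : ∀ᵐ ω ∂μ, ‖f₂ ω‖ ≤ 1 := by
    filter_upwards [hb₂] with ω h using by simpa [Real.norm_eq_abs] using h
  have hf₂sm : AEStronglyMeasurable[mΩ] f₂ μ := (hf₂meas.mono h𝓐).aestronglyMeasurable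
  have hmul : Integrable (f₂ * f₁) μ := hf₁i.bdd_mul hf₂sm hb₂'
  have hpull : μ[f₂ * f₁|𝓐] =ᵐ[μ] f₂ * μ[f₁|𝓐] :=
    condExp_stronglyMeasurable_mul_of_bound h𝓐 hf₂meas hf₁i 1 hb₂'
  -- condexp is a.e. bounded by 1
  have hg1 : ∀ᵐ ω ∂μ, |(μ[f₁|𝓐]) ω| ≤ 1 := by
    have := ae_bdd_condExp_of_ae_bdd (m := 𝓐) (R := 1) (f := f₁) (by simpa using hb₁)
    simpa using this
  have hgi : Integrable (μ[f₁|𝓐]) μ := integrable_condExp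
  have hfg : Integrable (fun ω => f₂ ω * (μ[f₁|𝓐]) ω) μ := hgi.bdd_mul hf₂sm hb₂'
  -- step 1 : rewrite covariance
  have h1 : ∫ ω, f₁ ω * f₂ ω ∂μ = ∫ ω, f₂ ω * (μ[f₁|𝓐]) ω ∂μ := by
    calc ∫ ω, f₁ ω * f₂ ω ∂μ = ∫ ω, (f₂ * f₁) ω ∂μ := by
          simp [mul_comm]
      _ = ∫ ω, (μ[f₂ * f₁|𝓐]) ω ∂μ := (integral_condExp h𝓐).symm
      _ = ∫ ω, f₂ ω * (μ[f₁|𝓐]) ω ∂μ := integral_congr_ae hpull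
  have hcov : (∫ ω, f₁ ω * f₂ ω ∂μ) - m * (∫ ω, f₂ ω ∂μ)
      = ∫ ω, f₂ ω * ((μ[f₁|𝓐]) ω - m) ∂μ := by
    rw [h1]
    rw [show (∫ ω, f₂ ω * ((μ[f₁|𝓐]) ω - m) ∂μ)
        = ∫ ω, (f₂ ω * (μ[f₁|𝓐]) ω - f₂ ω * m) ∂μ from by
          congr 1; ext ω; ring]
    rw [integral_sub hfg (hf₂i.mul_const m)]
    simp [integral_mul_const, mul_comm]
  rw [hcov]
  -- Memℒp facts for Cauchy-Schwarz
  have hhsm : AEStronglyMeasurable[mΩ] (fun ω => (μ[f₁|𝓐]) ω - m) μ :=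
    (stronglyMeasurable_condExp.mono h𝓐).aestronglyMeasurable.sub aestronglyMeasurable_const
  have hh2 : MemLp (fun ω => (μ[f₁|𝓐]) ω - m) 2 μ := by
    refine MemLp.of_bound hhsm (1 + |m|) ?_
    filter_upwards [hg1] with ω h
    calc ‖(μ[f₁|𝓐]) ω - m‖ ≤ |(μ[f₁|𝓐]) ω| + |m| := abs_sub _ _
      _ ≤ 1 + |m| := by linarith
  have h2 : ENNReal.ofReal (2:ℝ) = 2 := by norm_num
  have hpq : (2:ℝ).HolderConjugate 2 := Real.HolderConjugate.two_two
  have hCS := integral_mul_norm_le_Lp_mul_Lq (μ := μ) hpq (h2 ▸ hf₂) (h2 ▸ hh2)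
  have habs : |∫ ω, f₂ ω * ((μ[f₁|𝓐]) ω - m) ∂μ|
      ≤ ∫ ω, ‖f₂ ω‖ * ‖(μ[f₁|𝓐]) ω - m‖ ∂μ := by
    calc |∫ ω, f₂ ω * ((μ[f₁|𝓐]) ω - m) ∂μ|
        ≤ ∫ ω, ‖f₂ ω * ((μ[f₁|𝓐]) ω - m)‖ ∂μ := by
          simpa using norm_integral_le_integral_norm (fun ω => f₂ ω * ((μ[f₁|𝓐]) ω - m))
      _ = ∫ ω, ‖f₂ ω‖ * ‖(μ[f₁|𝓐]) ω - m‖ ∂μ := by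
          simp [norm_mul]
  refine habs.trans (hCS.trans ?_)
  -- bound the two factors
  have hsq_int : Integrable (fun ω => ‖f₂ ω‖ ^ (2:ℝ)) μ :=
    hf₂.integrable_norm_rpow (by norm_num) (by norm_num)
  have hint1 : ∫ ω, ‖f₂ ω‖ ^ (2:ℝ) ∂μ ≤ 1 := by
    calc ∫ ω, ‖f₂ ω‖ ^ (2:ℝ) ∂μ ≤ ∫ _ω, (1:ℝ) ∂μ := by
          refine integral_mono_ae hsq_int (integrable_const 1) ?_
          filter_upwards [hb₂'] with ω h
          calc ‖f₂ ω‖ ^ (2:ℝ) ≤ 1 ^ (2:ℝ) :=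
                Real.rpow_le_rpow (norm_nonneg _) h (by norm_num)
            _ = 1 := Real.one_rpow _
      _ = 1 := by simp
  have hfac1 : (∫ ω, ‖f₂ ω‖ ^ (2:ℝ) ∂μ) ^ ((1:ℝ)/2) ≤ 1 := by
    refine Real.rpow_le_one ?_ hint1 (by norm_num)
    exact integral_nonneg fun ω => Real.rpow_nonneg (norm_nonneg _) _
  have hfac2 : (∫ ω, ‖(μ[f₁|𝓐]) ω - m‖ ^ (2:ℝ) ∂μ) ^ ((1:ℝ)/2)
      = Real.sqrt (∫ ω, ((μ[f₁|𝓐]) ω - m) ^ 2 ∂μ) := by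
    rw [Real.sqrt_eq_rpow]
    congr 1
    refine integral_congr_ae (Filter.Eventually.of_forall fun ω => ?_)
    show ‖(μ[f₁|𝓐]) ω - m‖ ^ (2:ℝ) = ((μ[f₁|𝓐]) ω - m) ^ 2
    rw [show ((2:ℝ)) = ((2:ℕ):ℝ) by norm_num, Real.rpow_natCast]
    simp [Real.norm_eq_abs, sq_abs]
  rw [hfac2] at hCS ⊢
  calc (∫ ω, ‖f₂ ω‖ ^ (2:ℝ) ∂μ) ^ ((1:ℝ)/2) * Real.sqrt (∫ ω, ((μ[f₁|𝓐]) ω - m) ^ 2 ∂μ)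
      ≤ 1 * Real.sqrt (∫ ω, ((μ[f₁|𝓐]) ω - m) ^ 2 ∂μ) :=
        mul_le_mul_of_nonneg_right hfac1 (Real.sqrt_nonneg _)
    _ = _ := one_mul _
end

section
/- Let (Ω, 𝓕, P) be a probability space, 𝓐 and 𝓒 sub-σ-algebras, and f ∈ L² bounded by 1, with the Markov property E[f | 𝓐] = E[f | 𝓒] holding almost surely. Then for any g ∈ L² measurable with respect to 𝓐 with |g| ≤ 1: |Cov(f,g)| ≤ ‖E[f | 𝓒] - E[f]‖₂. -/
open MeasureTheory

/-- covariance bound via a Markov property. If `E[f|𝓐] = E[f|𝓒]`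
a.s. and `g` is `𝓐`-measurable, both bounded by 1, then
`|Cov(f,g)| ≤ ‖E[f|𝓒] - E[f]‖₂`. -/
theorem cov_le_L2_condexp_dist_markov {Ω : Type*} {mΩ : MeasurableSpace Ω}
    (μ : Measure Ω) [IsProbabilityMeasure μ]
    (𝓐 𝓒 : MeasurableSpace Ω) (h𝓐 : 𝓐 ≤ mΩ) (h𝓒 : 𝓒 ≤ mΩ)
    (f g : Ω → ℝ)
    (hf : MemLp f 2 μ) (hg : MemLp g 2 μ)
    (hgmeas : StronglyMeasurable[𝓐] g)
    (hbf : ∀ᵐ ω ∂μ, |f ω| ≤ 1) (hbg : ∀ᵐ ω ∂μ, |g ω| ≤ 1)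
    (hMarkov : (μ[f|𝓐]) =ᵐ[μ] (μ[f|𝓒])) :
    |(∫ ω, f ω * g ω ∂μ) - (∫ ω, f ω ∂μ) * (∫ ω, g ω ∂μ)| ≤
      Real.sqrt (∫ ω, ((μ[f|𝓒]) ω - ∫ ω', f ω' ∂μ) ^ 2 ∂μ) := by
  set c : ℝ := ∫ ω', f ω' ∂μ with hc
  have hfi : Integrable f μ := hf.integrable one_le_two
  have hgi : Integrable g μ := hg.integrable one_le_two
  have hbg' : ∀ᵐ ω ∂μ, ‖g ω‖ ≤ 1 := by
    filter_upwards [hbg] with ω h using by simpa [Real.norm_eq_abs] using h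
  have hfgi : Integrable (fun ω => g ω * f ω) μ := hfi.bdd_mul hg.1 hbg'
  -- set h := μ[f|𝓒] - c
  set h : Ω → ℝ := fun ω => (μ[f|𝓒]) ω - c with hh
  have hcond_bdd : ∀ᵐ ω ∂μ, |(μ[f|𝓒]) ω| ≤ 1 := by
    have := ae_bdd_condExp_of_ae_bdd (m := 𝓒) (μ := μ) (R := 1) (f := f)
      (by simpa using hbf)
    simpa using this
  have hhmeas : AEStronglyMeasurable[mΩ] h μ :=
    ((stronglyMeasurable_condExp.mono h𝓒).aestronglyMeasurable).sub
      aestronglyMeasurable_const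
  have hhbdd : ∀ᵐ ω ∂μ, ‖h ω‖ ≤ 1 + |c| := by
    filter_upwards [hcond_bdd] with ω hω
    calc ‖h ω‖ = |(μ[f|𝓒]) ω - c| := by simp [hh, Real.norm_eq_abs]
    _ ≤ |(μ[f|𝓒]) ω| + |c| := abs_sub _ _
    _ ≤ 1 + |c| := by linarith
  have hh2 : MemLp h 2 μ := MemLp.of_bound hhmeas (1 + |c|) hhbdd
  have hhi : Integrable h μ := hh2.integrable one_le_two
  have hghi : Integrable (fun ω => g ω * h ω) μ := hhi.bdd_mul hg.1 hbg'
  -- Step 1 : ∫ f g = ∫ g ⬝ E[f|𝓒]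
  have hpull : (μ[(fun ω => g ω * f ω)|𝓐]) =ᵐ[μ] fun ω => g ω * (μ[f|𝓐]) ω := by
    have := condExp_mul_of_stronglyMeasurable_left (μ := μ) hgmeas hfgi hfi
    exact this
  have h1 : ∫ ω, f ω * g ω ∂μ = ∫ ω, g ω * (μ[f|𝓒]) ω ∂μ := by
    calc ∫ ω, f ω * g ω ∂μ = ∫ ω, g ω * f ω ∂μ := by
          simp only [mul_comm]
    _ = ∫ ω, (μ[(fun ω => g ω * f ω)|𝓐]) ω ∂μ := (integral_condExp h𝓐).symm
    _ = ∫ ω, g ω * (μ[f|𝓒]) ω ∂μ := by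
          refine integral_congr_ae ?_
          filter_upwards [hpull, hMarkov] with ω h1 h2
          rw [h1, h2]
  -- Step 2 : covariance = ∫ g ⬝ h
  have h2 : (∫ ω, f ω * g ω ∂μ) - c * (∫ ω, g ω ∂μ) = ∫ ω, g ω * h ω ∂μ := by
    rw [h1]
    have : ∫ ω, g ω * h ω ∂μ
        = (∫ ω, g ω * (μ[f|𝓒]) ω ∂μ) - ∫ ω, g ω * c ∂μ := by
      rw [← integral_sub (integrable_condExp.bdd_mul hg.1 hbg') (hgi.mul_const c)]
      refine integral_congr_ae (Filter.Eventually.of_forall fun ω => ?_)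
      simp [hh, mul_sub]
    rw [this, integral_mul_const]
    ring
  -- Step 3 : |∫ g h| ≤ ∫ |h|
  have h3 : |∫ ω, g ω * h ω ∂μ| ≤ ∫ ω, |h ω| ∂μ := by
    rw [← Real.norm_eq_abs]
    refine le_trans (norm_integral_le_integral_norm _) ?_
    refine integral_mono_ae hghi.norm hhi.abs ?_
    filter_upwards [hbg] with ω hω
    calc ‖g ω * h ω‖ = |g ω| * |h ω| := by rw [Real.norm_eq_abs, abs_mul]
    _ ≤ 1 * |h ω| := mul_le_mul_of_nonneg_right hω (abs_nonneg _)
    _ = |h ω| := one_mul _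
  -- Step 4 : ∫ |h| ≤ sqrt (∫ h²)  (Cauchy–Schwarz / Hölder)
  have h4 : ∫ ω, |h ω| ∂μ ≤ Real.sqrt (∫ ω, (h ω) ^ 2 ∂μ) := by
    have hpq : Real.HolderConjugate 2 2 := ⟨by norm_num, by norm_num, by norm_num⟩
    have hhabs : MemLp (fun ω => |h ω|) (ENNReal.ofReal 2) μ := by
      rw [show ENNReal.ofReal 2 = 2 by norm_num]
      simpa [Real.norm_eq_abs] using hh2.norm
    have hone : MemLp (fun _ : Ω => (1 : ℝ)) (ENNReal.ofReal 2) μ := memLp_const 1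
    have := integral_mul_le_Lp_mul_Lq_of_nonneg hpq
      (Filter.Eventually.of_forall fun ω => abs_nonneg (h ω))
      (Filter.Eventually.of_forall fun _ => zero_le_one) hhabs hone
    have hsq : ∀ x : ℝ, x ^ (2:ℝ) = x ^ 2 := fun x => by
      rw [show (2:ℝ) = ((2:ℕ):ℝ) by norm_num, Real.rpow_natCast]
    simp only [mul_one, hsq, one_pow, sq_abs, integral_const, measure_univ,
      ENNReal.toReal_one, smul_eq_mul, Real.one_rpow, one_mul, probReal_univ] at this
    calc ∫ ω, |h ω| ∂μ ≤ (∫ ω, (h ω) ^ 2 ∂μ) ^ (1 / (2:ℝ)) := this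
    _ = Real.sqrt (∫ ω, (h ω) ^ 2 ∂μ) := (Real.sqrt_eq_rpow _).symm
  calc |(∫ ω, f ω * g ω ∂μ) - c * (∫ ω, g ω ∂μ)|
      = |∫ ω, g ω * h ω ∂μ| := by rw [h2]
  _ ≤ ∫ ω, |h ω| ∂μ := h3
  _ ≤ Real.sqrt (∫ ω, (h ω) ^ 2 ∂μ) := h4
end
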